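/- arXiv:1511.06257 — 2 statements merged into one kernel-verified Lean document; each statement's English description precedes it below -/
import Mathlib

section
/- Let s > 0 and d₁, d₂ ≥ 1, and let a : ℕ^{d₂} × ℕ^{d₁} → ℂ satisfy sup_{α,β} |a(α,β)| e^{r(|α|^{1/(2s)} + |β|^{1/(2s)})} < ∞ for every r > 0. Then there exist a matrix b : ℕ^{d₂} × ℕ^{d₁} → ℂ and strictly positive real numbers (λ_β)_{β∈ℕ^{d₁}} such that a(α,β) = b(α,β)·λ_β for all α, β, and such that for every r > 0 one has sup_{α,β} |b(α,β)| e^{r(|α|^{1/(2s)} + |β|^{1/(2s)})} < ∞ and sup_β λ_β e^{r|β|^{1/(2s)}} < ∞. (Hence the operator with matrix a factorizes as the composition of the operator with matrix b and the positive diagonal operator with eigenvalues λ_β, both factors having matrices of the same Beurling-Pilipović decay class as a.) -/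
/-- `|α| = α₁ + ⋯ + α_d` as a real number. -/
noncomputable def msz {d : ℕ} (α : Fin d → ℕ) : ℝ := (∑ i, α i : ℕ)

theorem msz_nonneg {d : ℕ} (α : Fin d → ℕ) : 0 ≤ msz α := by
  unfold msz; positivity

/-- Factorization of a Beurling–Pilipović matrix. If
`sup_{α,β} |a(α,β)| e^{r(|α|^{1/(2s)}+|β|^{1/(2s)})} < ∞` for every `r > 0`, then
`a(α,β) = b(α,β)·λ_β` where `b` satisfies bounds of the same type for every `r > 0`
and the strictly positive diagonal `λ` satisfies `sup_β λ_β e^{r|β|^{1/(2s)}} < ∞`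
for every `r > 0`. -/
theorem stmt6
    (s : ℝ) (hs : 0 < s) (d₁ d₂ : ℕ) (hd₁ : 1 ≤ d₁) (hd₂ : 1 ≤ d₂)
    (a : (Fin d₂ → ℕ) → (Fin d₁ → ℕ) → ℂ)
    (ha : ∀ r > (0:ℝ), ∃ C : ℝ, ∀ (α : Fin d₂ → ℕ) (β : Fin d₁ → ℕ),
      ‖a α β‖ * Real.exp (r * (msz α ^ (1/(2*s)) + msz β ^ (1/(2*s)))) ≤ C) :
    ∃ b : (Fin d₂ → ℕ) → (Fin d₁ → ℕ) → ℂ, ∃ lam : (Fin d₁ → ℕ) → ℝ,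
      (∀ β, 0 < lam β) ∧
      (∀ (α : Fin d₂ → ℕ) (β : Fin d₁ → ℕ), a α β = b α β * (lam β : ℂ)) ∧
      (∀ r > (0:ℝ), ∃ C : ℝ, ∀ (α : Fin d₂ → ℕ) (β : Fin d₁ → ℕ),
        ‖b α β‖ * Real.exp (r * (msz α ^ (1/(2*s)) + msz β ^ (1/(2*s)))) ≤ C) ∧
      (∀ r > (0:ℝ), ∃ C : ℝ, ∀ β : Fin d₁ → ℕ,
        lam β * Real.exp (r * msz β ^ (1/(2*s))) ≤ C) := by
  classical
  set p : ℝ := 1/(2*s) with hp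
  have hmp : ∀ {d : ℕ} (γ : Fin d → ℕ), 0 ≤ msz γ ^ p := fun γ =>
    Real.rpow_nonneg (msz_nonneg γ) p
  -- boundedness of the columns
  have hbdd : ∀ β, BddAbove (Set.range fun α => ‖a α β‖) := by
    intro β
    obtain ⟨C, hC⟩ := ha 1 one_pos
    refine ⟨C, ?_⟩
    rintro x ⟨α, rfl⟩
    have h1 : (1:ℝ) ≤ Real.exp (1 * (msz α ^ p + msz β ^ p)) := by
      apply Real.one_le_exp
      have := hmp α; have := hmp β; nlinarith
    calc ‖a α β‖ = ‖a α β‖ * 1 := (mul_one _).symm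
      _ ≤ ‖a α β‖ * Real.exp (1 * (msz α ^ p + msz β ^ p)) := by
          exact mul_le_mul_of_nonneg_left h1 (norm_nonneg _)
      _ ≤ C := hC α β
  set m : (Fin d₁ → ℕ) → ℝ := fun β => ⨆ α, ‖a α β‖ with hm
  have hle_m : ∀ α β, ‖a α β‖ ≤ m β := fun α β => le_ciSup (hbdd β) α
  have hm_nonneg : ∀ β, 0 ≤ m β := fun β =>
    le_trans (norm_nonneg _) (hle_m (fun _ => 0) β)
  set lam : (Fin d₁ → ℕ) → ℝ :=
    fun β => Real.sqrt (m β) + Real.exp (-(msz β ^ p)^2) with hlam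
  have hlam_pos : ∀ β, 0 < lam β := fun β =>
    add_pos_of_nonneg_of_pos (Real.sqrt_nonneg _) (Real.exp_pos _)
  refine ⟨fun α β => a α β / (lam β : ℂ), lam, hlam_pos, ?_, ?_, ?_⟩
  · intro α β
    have : (lam β : ℂ) ≠ 0 := by
      exact_mod_cast (hlam_pos β).ne'
    field_simp
  · -- bound on b
    intro r hr
    obtain ⟨C, hC⟩ := ha (2*r) (by linarith)
    refine ⟨Real.sqrt (max C 0), ?_⟩
    intro α β
    have hnorm : ‖a α β / (lam β : ℂ)‖ = ‖a α β‖ / lam β := by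
      rw [norm_div, Complex.norm_real, Real.norm_of_nonneg (hlam_pos β).le]
    rw [hnorm]
    by_cases h0 : a α β = 0
    · simp [h0, Real.sqrt_nonneg]
    · have hapos : 0 < ‖a α β‖ := norm_pos_iff.mpr h0
      have hmpos : 0 < m β := lt_of_lt_of_le hapos (hle_m α β)
      have h1 : ‖a α β‖ / lam β ≤ Real.sqrt ‖a α β‖ := by
        have hle1 : Real.sqrt (m β) ≤ lam β := le_add_of_nonneg_right (Real.exp_pos _).le
        have hle2 : Real.sqrt ‖a α β‖ ≤ Real.sqrt (m β) :=
          Real.sqrt_le_sqrt (hle_m α β)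
        have hsa : 0 < Real.sqrt ‖a α β‖ := Real.sqrt_pos.mpr hapos
        calc ‖a α β‖ / lam β ≤ ‖a α β‖ / Real.sqrt ‖a α β‖ := by
              apply div_le_div_of_nonneg_left hapos.le hsa (le_trans hle2 hle1)
          _ = Real.sqrt ‖a α β‖ := Real.div_sqrt
      set x : ℝ := msz α ^ p + msz β ^ p with hx
      have hsq : Real.exp (r * x) = Real.sqrt (Real.exp (2*r*x)) := by
        rw [show (2*r*x) = r*x + r*x by ring, Real.exp_add,
          Real.sqrt_mul_self (Real.exp_nonneg _)]
      calc ‖a α β‖ / lam β * Real.exp (r * x)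
          ≤ Real.sqrt ‖a α β‖ * Real.sqrt (Real.exp (2*r*x)) := by
            rw [← hsq]; exact mul_le_mul_of_nonneg_right h1 (Real.exp_nonneg _)
        _ = Real.sqrt (‖a α β‖ * Real.exp (2*r*x)) := (Real.sqrt_mul (norm_nonneg _) _).symm
        _ ≤ Real.sqrt (max C 0) := by
            apply Real.sqrt_le_sqrt
            exact le_trans (hC α β) (le_max_left _ _)
  · -- bound on lam
    intro r hr
    obtain ⟨C, hC⟩ := ha (2*r) (by linarith)
    refine ⟨Real.sqrt (max C 0) + Real.exp (r^2/4), ?_⟩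
    intro β
    set t : ℝ := msz β ^ p with ht
    have ht0 : 0 ≤ t := hmp β
    have hmle : m β ≤ max C 0 * Real.exp (-(2*r*t)) := by
      apply ciSup_le
      intro α
      have h1 : Real.exp (2*r*t) ≤ Real.exp (2*r*(msz α ^ p + t)) := by
        apply Real.exp_le_exp.mpr
        have := hmp α; nlinarith
      have h2 : ‖a α β‖ * Real.exp (2*r*t) ≤ C :=
        le_trans (mul_le_mul_of_nonneg_left h1 (norm_nonneg _)) (hC α β)
      rw [Real.exp_neg, ← div_eq_mul_inv, le_div_iff₀ (Real.exp_pos _)]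
      exact h2.trans (le_max_left _ _)
    have hexp : Real.sqrt (Real.exp (-(2*r*t))) = Real.exp (-(r*t)) := by
      rw [show (-(2*r*t)) = -(r*t) + -(r*t) by ring, Real.exp_add,
        Real.sqrt_mul_self (Real.exp_nonneg _)]
    have hsqrt : Real.sqrt (m β) ≤ Real.sqrt (max C 0) * Real.exp (-(r*t)) := by
      calc Real.sqrt (m β) ≤ Real.sqrt (max C 0 * Real.exp (-(2*r*t))) :=
            Real.sqrt_le_sqrt hmle
        _ = Real.sqrt (max C 0) * Real.exp (-(r*t)) := by
            rw [Real.sqrt_mul (le_max_right C 0), hexp]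
    have h3 : Real.exp (-(t^2)) * Real.exp (r*t) ≤ Real.exp (r^2/4) := by
      rw [← Real.exp_add]
      apply Real.exp_le_exp.mpr
      nlinarith [sq_nonneg (t - r/2)]
    have h4 : Real.sqrt (m β) * Real.exp (r*t) ≤ Real.sqrt (max C 0) := by
      calc Real.sqrt (m β) * Real.exp (r*t)
          ≤ Real.sqrt (max C 0) * Real.exp (-(r*t)) * Real.exp (r*t) :=
            mul_le_mul_of_nonneg_right hsqrt (Real.exp_nonneg _)
        _ = Real.sqrt (max C 0) := by
            rw [mul_assoc, ← Real.exp_add]; simp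
    calc lam β * Real.exp (r*t)
        = Real.sqrt (m β) * Real.exp (r*t) + Real.exp (-(t^2)) * Real.exp (r*t) := by
          rw [show lam β = Real.sqrt (m β) + Real.exp (-(t^2)) from rfl, add_mul]
      _ ≤ Real.sqrt (max C 0) + Real.exp (r^2/4) := add_le_add h4 h3
end

section
/- Let s > 0, d₁, d₂ ≥ 1 and d = min(d₁, d₂). Suppose a : ℕ^{d₂} × ℕ^{d₁} → ℂ is given by a(α,β) = ∑_{j=1}^∞ λ_j u_j(α) · conj(v_j(β)) (absolutely convergent for each α, β), where λ_j > 0, (u_j)_{j≥1} is a family of nonzero pairwise orthogonal vectors in ℓ²(ℕ^{d₂}), (v_j)_{j≥1} is a family of nonzero pairwise orthogonal vectors in ℓ²(ℕ^{d₁}), and suppose there exist C, r, h > 0 such that for all integers N ≥ 0 and j ≥ 1: λ_j ≤ C e^{−r j^{1/(2ds)}}, (∑_α (2|α| + d₂)^{2N} |u_j(α)|²)^{1/2} ≤ C e^{−r j^{1/(2ds)}} h^N (N!)^{2s}, and (∑_β (2|β| + d₁)^{2N} |v_j(β)|²)^{1/2} ≤ C e^{−r j^{1/(2ds)}} h^N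 (N!)^{2s}. Then there exist C', h' > 0 such that for all integers N₁, N₂ ≥ 0: (∑_{α,β} (2|β| + d₁)^{2N₁} (2|α| + d₂)^{2N₂} |a(α,β)|²)^{1/2} ≤ C' h'^{N₁ + N₂} (N₁! N₂!)^{2s}. -/
set_option maxHeartbeats 1000000
open scoped ENNReal


lemma aux_summable_exp (r ε : ℝ) (hr : 0 < r) (hε : 0 < ε) :
    Summable fun j : ℕ => Real.exp (-(r * ((j : ℝ) + 1) ^ ε)) := by
  set m := ⌈2 / ε⌉₊ with hm
  have hfac : (0:ℝ) < m.factorial := by exact_mod_cast m.factorial_pos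
  have hmε : 2 ≤ ε * m := by
    have h1 : 2 / ε ≤ (m : ℝ) := Nat.le_ceil _
    calc (2:ℝ) = ε * (2 / ε) := by field_simp
    _ ≤ ε * m := by nlinarith
  have hbase : Summable fun j : ℕ => ((m.factorial : ℝ) / r ^ m) * (1 / ((j:ℝ) + 1) ^ 2) := by
    apply Summable.mul_left
    have := (summable_nat_add_iff (f := fun n : ℕ => 1 / (n:ℝ) ^ 2) 1).2
      (Real.summable_one_div_nat_pow.2 one_lt_two)
    exact this.congr fun n => by push_cast; ring_nf
  apply Summable.of_nonneg_of_le (fun j => (Real.exp_pos _).le) _ hbase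
  intro j
  set x : ℝ := (j : ℝ) + 1 with hx
  have hx1 : (1:ℝ) ≤ x := by rw [hx]; have := Nat.cast_nonneg (α := ℝ) j; linarith
  have hx0 : (0:ℝ) < x := by linarith
  have key : x ^ 2 * (r ^ m / m.factorial) ≤ Real.exp (r * x ^ ε) := by
    have hnn : (0:ℝ) ≤ r * x ^ ε := by positivity
    have h1 := Real.pow_div_factorial_le_exp _ hnn m
    have h2 : x ^ 2 ≤ (x ^ ε) ^ m := by
      rw [← Real.rpow_natCast (x ^ ε) m, ← Real.rpow_mul hx0.le]
      calc x ^ 2 = x ^ (2:ℝ) := (Real.rpow_two x).symm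
      _ ≤ x ^ (ε * m) := Real.rpow_le_rpow_of_exponent_le hx1 hmε
    calc x ^ 2 * (r ^ m / m.factorial) ≤ (x ^ ε) ^ m * (r ^ m / m.factorial) :=
          mul_le_mul_of_nonneg_right h2 (by positivity)
    _ = (r * x ^ ε) ^ m / m.factorial := by rw [mul_pow]; ring
    _ ≤ _ := h1
  rw [Real.exp_neg, inv_le_comm₀ (Real.exp_pos _) (by positivity)]
  have hne : ((m.factorial : ℝ) / r ^ m * (1 / x ^ 2))⁻¹ = x ^ 2 * (r ^ m / m.factorial) := by
    field_simp
  rw [hne]; exact key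

lemma aux_hasSum_apply {ι κ : Type*} {F : κ → lp (fun _ : ι => ℂ) 2}
    {G : lp (fun _ : ι => ℂ) 2} (hF : HasSum F G) (p : ι) :
    HasSum (fun j => F j p) (G p) := by
  have hlip : LipschitzWith 1 (fun g : lp (fun _ : ι => ℂ) 2 => g p) := by
    apply LipschitzWith.of_dist_le_mul
    intro f g
    rw [dist_eq_norm, dist_eq_norm]
    push_cast
    rw [one_mul]
    have : f p - g p = (f - g) p := by rw [lp.coeFn_sub]; rfl
    rw [this]
    exact lp.norm_apply_le_norm two_ne_zero (f - g) p
  exact hF.map (AddMonoidHom.mk' (fun g : lp (fun _ : ι => ℂ) 2 => g p)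
    (fun f g => rfl)) hlip.continuous

/-- Conversely, if `a(α,β) = ∑_j λ_j u_j(α) conj(v_j β)` (absolutely
convergent) with `λ_j > 0`, nonzero pairwise orthogonal families `(u_j)` in `ℓ²(ℕ^{d₂})`
and `(v_j)` in `ℓ²(ℕ^{d₁})`, satisfying, with `d = min(d₁,d₂)`,
`λ_j ≤ C e^{-r j^{1/(2ds)}}` and the weighted `ℓ²`-bounds
`(∑_α (2|α|+d₂)^{2N} |u_j(α)|²)^{1/2} ≤ C e^{-r j^{1/(2ds)}} h^N (N!)^{2s}` (and likewise
for `v_j` with `d₁`), then there are `C', h' > 0` such that for all `N₁, N₂ ≥ 0`,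
`(∑_{α,β} (2|β|+d₁)^{2N₁} (2|α|+d₂)^{2N₂} |a(α,β)|²)^{1/2} ≤ C' h'^{N₁+N₂} (N₁!N₂!)^{2s}`.
(Indices `j ≥ 1` are encoded as `j+1`, `j : ℕ`.) -/
theorem stmt18
    (s : ℝ) (hs : 0 < s) (d₁ d₂ : ℕ) (hd₁ : 1 ≤ d₁) (hd₂ : 1 ≤ d₂)
    (a : (Fin d₂ → ℕ) → (Fin d₁ → ℕ) → ℂ)
    (lam : ℕ → ℝ) (u : ℕ → lp (fun _ : (Fin d₂ → ℕ) => ℂ) 2)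
    (v : ℕ → lp (fun _ : (Fin d₁ → ℕ) => ℂ) 2)
    (C r h : ℝ) (hC : 0 < C) (hr : 0 < r) (hh : 0 < h)
    (hlampos : ∀ j, 0 < lam j) (hune : ∀ j, u j ≠ 0) (hvne : ∀ j, v j ≠ 0)
    (huorth : ∀ i j, i ≠ j → inner (𝕜 := ℂ) (u i) (u j) = (0:ℂ))
    (hvorth : ∀ i j, i ≠ j → inner (𝕜 := ℂ) (v i) (v j) = (0:ℂ))
    (hconv : ∀ (α : Fin d₂ → ℕ) (β : Fin d₁ → ℕ),
      Summable (fun j : ℕ => lam j * ‖u j α‖ * ‖v j β‖) ∧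
      a α β = ∑' j : ℕ, (lam j : ℂ) * u j α * (starRingEnd ℂ) (v j β))
    (hlam : ∀ j : ℕ, lam j ≤
      C * Real.exp (-(r * ((j : ℝ) + 1) ^ (1/(2*(min d₁ d₂ : ℝ)*s)))))
    (hu : ∀ (N j : ℕ),
      Summable (fun α : Fin d₂ → ℕ => (2 * msz α + d₂) ^ (2*N) * ‖u j α‖^2) ∧
      Real.sqrt (∑' α : Fin d₂ → ℕ, (2 * msz α + d₂) ^ (2*N) * ‖u j α‖^2)
        ≤ C * Real.exp (-(r * ((j : ℝ) + 1) ^ (1/(2*(min d₁ d₂ : ℝ)*s))))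
            * h ^ N * (Nat.factorial N : ℝ) ^ (2*s))
    (hv : ∀ (N j : ℕ),
      Summable (fun β : Fin d₁ → ℕ => (2 * msz β + d₁) ^ (2*N) * ‖v j β‖^2) ∧
      Real.sqrt (∑' β : Fin d₁ → ℕ, (2 * msz β + d₁) ^ (2*N) * ‖v j β‖^2)
        ≤ C * Real.exp (-(r * ((j : ℝ) + 1) ^ (1/(2*(min d₁ d₂ : ℝ)*s))))
            * h ^ N * (Nat.factorial N : ℝ) ^ (2*s)) :
    ∃ C' > (0:ℝ), ∃ h' > (0:ℝ), ∀ N₁ N₂ : ℕ,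
      Summable (fun p : (Fin d₂ → ℕ) × (Fin d₁ → ℕ) =>
        (2 * msz p.2 + d₁) ^ (2*N₁) * (2 * msz p.1 + d₂) ^ (2*N₂) * ‖a p.1 p.2‖^2) ∧
      Real.sqrt (∑' p : (Fin d₂ → ℕ) × (Fin d₁ → ℕ),
          (2 * msz p.2 + d₁) ^ (2*N₁) * (2 * msz p.1 + d₂) ^ (2*N₂) * ‖a p.1 p.2‖^2)
        ≤ C' * h' ^ (N₁ + N₂) *
            ((Nat.factorial N₁ : ℝ) * (Nat.factorial N₂ : ℝ)) ^ (2*s) := by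
  classical
  set ε : ℝ := 1/(2*(min d₁ d₂ : ℝ)*s) with hεdef
  have hmin : (0:ℝ) < (min d₁ d₂ : ℝ) := by
    have h1 : (0:ℝ) < d₁ := by exact_mod_cast hd₁
    have h2 : (0:ℝ) < d₂ := by exact_mod_cast hd₂
    first
      | exact lt_min h1 h2
      | exact_mod_cast lt_min hd₁ hd₂
  have hεpos : 0 < ε := by
    rw [hεdef]
    exact div_pos one_pos (mul_pos (mul_pos two_pos hmin) hs)
  have hSsum : Summable (fun j : ℕ => Real.exp (-(r * ((j:ℝ)+1) ^ ε))) :=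
    aux_summable_exp r ε hr hεpos
  set S := ∑' j : ℕ, Real.exp (-(r * ((j:ℝ)+1) ^ ε)) with hSdef
  have hSpos : 0 < S :=
    Summable.tsum_pos hSsum (fun j => (Real.exp_pos _).le) 0 (Real.exp_pos _)
  have hEpos : ∀ j : ℕ, 0 < Real.exp (-(r * ((j:ℝ)+1) ^ ε)) := fun j => Real.exp_pos _
  have hEle1 : ∀ j : ℕ, Real.exp (-(r * ((j:ℝ)+1) ^ ε)) ≤ 1 := by
    intro j
    apply Real.exp_le_one_iff.2
    have : (0:ℝ) ≤ ((j:ℝ)+1) ^ ε := Real.rpow_nonneg (by positivity) _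
    nlinarith
  refine ⟨C^3 * S, by positivity, h, hh, ?_⟩
  intro N₁ N₂
  set w₁ : (Fin d₁ → ℕ) → ℝ := fun β => (2 * msz β + d₁) ^ (2*N₁) with hw₁
  set w₂ : (Fin d₂ → ℕ) → ℝ := fun α => (2 * msz α + d₂) ^ (2*N₂) with hw₂
  have hmsz : ∀ {d : ℕ} (α : Fin d → ℕ), 0 ≤ msz α := fun α => Nat.cast_nonneg _
  have hw₁0 : ∀ β, 0 ≤ w₁ β := by
    intro β; rw [hw₁]; have := hmsz β; positivity
  have hw₂0 : ∀ α, 0 ≤ w₂ α := by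
    intro α; rw [hw₂]; have := hmsz α; positivity
  set f : ℕ → ((Fin d₂ → ℕ) × (Fin d₁ → ℕ)) → ℂ := fun j p =>
    (Real.sqrt (w₁ p.2 * w₂ p.1) : ℂ) *
      ((lam j : ℂ) * u j p.1 * (starRingEnd ℂ) (v j p.2)) with hf
  have hnf : ∀ j p, ‖f j p‖^2
      = (lam j)^2 * ((w₂ p.1 * ‖u j p.1‖^2) * (w₁ p.2 * ‖v j p.2‖^2)) := by
    intro j p
    have h1 : ‖f j p‖ = Real.sqrt (w₁ p.2 * w₂ p.1) * (lam j * ‖u j p.1‖ * ‖v j p.2‖) := by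
      rw [hf]
      simp only [norm_mul, Complex.norm_real, RCLike.norm_conj, Real.norm_eq_abs,
        abs_of_pos (hlampos j), abs_of_nonneg (Real.sqrt_nonneg _)]
    rw [h1, mul_pow, Real.sq_sqrt (mul_nonneg (hw₁0 _) (hw₂0 _))]
    ring
  have huS : ∀ j, Summable (fun α => w₂ α * ‖u j α‖^2) := fun j => (hu N₂ j).1
  have hvS : ∀ j, Summable (fun β => w₁ β * ‖v j β‖^2) := fun j => (hv N₁ j).1
  have hprodS : ∀ j, Summable (fun p : (Fin d₂ → ℕ) × (Fin d₁ → ℕ) =>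
      (w₂ p.1 * ‖u j p.1‖^2) * (w₁ p.2 * ‖v j p.2‖^2)) := fun j =>
    Summable.mul_of_nonneg (huS j) (hvS j)
      (fun α => mul_nonneg (hw₂0 α) (sq_nonneg _))
      (fun β => mul_nonneg (hw₁0 β) (sq_nonneg _))
  have hsum2 : ∀ j, Summable (fun p : (Fin d₂ → ℕ) × (Fin d₁ → ℕ) => ‖f j p‖^2) := by
    intro j
    exact ((hprodS j).mul_left ((lam j)^2)).congr fun p => (hnf j p).symm
  have hmem : ∀ j, Memℓp (f j) 2 := by
    intro j
    apply memℓp_gen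
    have h2 : ((2:ℝ≥0∞)).toReal = (2:ℝ) := by simp
    rw [h2]
    simp only [Real.rpow_two]
    exact hsum2 j
  set F : ℕ → lp (fun _ : (Fin d₂ → ℕ) × (Fin d₁ → ℕ) => ℂ) 2 :=
    fun j => ⟨f j, hmem j⟩ with hFdef
  have htsum : ∀ j, (∑' p : (Fin d₂ → ℕ) × (Fin d₁ → ℕ), ‖f j p‖^2)
      = (lam j)^2 * ((∑' α, w₂ α * ‖u j α‖^2) * (∑' β, w₁ β * ‖v j β‖^2)) := by
    intro j
    calc (∑' p : (Fin d₂ → ℕ) × (Fin d₁ → ℕ), ‖f j p‖^2)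
        = ∑' p : (Fin d₂ → ℕ) × (Fin d₁ → ℕ),
            (lam j)^2 * ((w₂ p.1 * ‖u j p.1‖^2) * (w₁ p.2 * ‖v j p.2‖^2)) :=
          tsum_congr (hnf j)
    _ = (lam j)^2 * ∑' p : (Fin d₂ → ℕ) × (Fin d₁ → ℕ),
            (w₂ p.1 * ‖u j p.1‖^2) * (w₁ p.2 * ‖v j p.2‖^2) := tsum_mul_left
    _ = (lam j)^2 * ((∑' α, w₂ α * ‖u j α‖^2) * (∑' β, w₁ β * ‖v j β‖^2)) := by
        rw [Summable.tsum_prod (hprodS j)]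
        congr 1
        calc (∑' (α) (β), (w₂ α * ‖u j α‖^2) * (w₁ β * ‖v j β‖^2))
            = ∑' α, (w₂ α * ‖u j α‖^2) * (∑' β, w₁ β * ‖v j β‖^2) :=
              tsum_congr fun α => tsum_mul_left
        _ = (∑' α, w₂ α * ‖u j α‖^2) * (∑' β, w₁ β * ‖v j β‖^2) := tsum_mul_right
  have hnorm : ∀ j, ‖F j‖ = lam j *
      (Real.sqrt (∑' α, w₂ α * ‖u j α‖^2) * Real.sqrt (∑' β, w₁ β * ‖v j β‖^2)) := by
    intro j
    rw [lp.norm_eq_tsum_rpow (by norm_num) (F j)]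
    have h2 : ((2:ℝ≥0∞)).toReal = (2:ℝ) := by norm_num
    rw [h2]
    simp only [Real.rpow_two]
    rw [← Real.sqrt_eq_rpow]
    have hcoe : (∑' p, ‖(F j : ∀ _ : (Fin d₂ → ℕ) × (Fin d₁ → ℕ), ℂ) p‖^2)
        = ∑' p : (Fin d₂ → ℕ) × (Fin d₁ → ℕ), ‖f j p‖^2 := rfl
    rw [hcoe, htsum j, Real.sqrt_mul (sq_nonneg _),
      Real.sqrt_sq (hlampos j).le,
      Real.sqrt_mul (tsum_nonneg fun α => mul_nonneg (hw₂0 α) (sq_nonneg _))]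
  have hKey : ∀ j, ‖F j‖ ≤
      (C^3 * (h^(N₁+N₂) * ((Nat.factorial N₁ : ℝ) * (Nat.factorial N₂ : ℝ)) ^ (2*s)))
        * Real.exp (-(r * ((j:ℝ)+1) ^ ε)) := by
    intro j
    have h1 : lam j ≤ C * Real.exp (-(r * ((j:ℝ)+1) ^ ε)) := hlam j
    have h2 := (hu N₂ j).2
    have h3 := (hv N₁ j).2
    have hEj0 : (0:ℝ) < Real.exp (-(r * ((j:ℝ)+1) ^ ε)) := hEpos j
    have hEj1 := hEle1 j
    rw [hnorm j]
    have hfac1 : (0:ℝ) ≤ (Nat.factorial N₁ : ℝ) := Nat.cast_nonneg _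
    have hfac2 : (0:ℝ) ≤ (Nat.factorial N₂ : ℝ) := Nat.cast_nonneg _
    calc lam j * (Real.sqrt (∑' α, w₂ α * ‖u j α‖^2) * Real.sqrt (∑' β, w₁ β * ‖v j β‖^2))
        ≤ (C * Real.exp (-(r * ((j:ℝ)+1) ^ ε))) *
            ((C * Real.exp (-(r * ((j:ℝ)+1) ^ ε)) * h ^ N₂ * (Nat.factorial N₂ : ℝ) ^ (2*s)) *
             (C * Real.exp (-(r * ((j:ℝ)+1) ^ ε)) * h ^ N₁ * (Nat.factorial N₁ : ℝ) ^ (2*s))) := by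
          apply mul_le_mul h1
            (mul_le_mul h2 h3 (Real.sqrt_nonneg _) (by positivity))
            (mul_nonneg (Real.sqrt_nonneg _) (Real.sqrt_nonneg _))
            (by positivity)
    _ = (C^3 * (h^(N₁+N₂) * ((Nat.factorial N₁ : ℝ) ^ (2*s) * (Nat.factorial N₂ : ℝ) ^ (2*s))))
          * (Real.exp (-(r * ((j:ℝ)+1) ^ ε)) * (Real.exp (-(r * ((j:ℝ)+1) ^ ε)) *
             Real.exp (-(r * ((j:ℝ)+1) ^ ε)))) := by ring
    _ ≤ (C^3 * (h^(N₁+N₂) * ((Nat.factorial N₁ : ℝ) ^ (2*s) * (Nat.factorial N₂ : ℝ) ^ (2*s))))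
          * Real.exp (-(r * ((j:ℝ)+1) ^ ε)) := by
          apply mul_le_mul_of_nonneg_left _ (by positivity)
          nlinarith
    _ = (C^3 * (h^(N₁+N₂) * ((Nat.factorial N₁ : ℝ) * (Nat.factorial N₂ : ℝ)) ^ (2*s)))
          * Real.exp (-(r * ((j:ℝ)+1) ^ ε)) := by
          rw [Real.mul_rpow hfac1 hfac2]
  have hmaj : Summable (fun j : ℕ =>
      (C^3 * (h^(N₁+N₂) * ((Nat.factorial N₁ : ℝ) * (Nat.factorial N₂ : ℝ)) ^ (2*s)))
        * Real.exp (-(r * ((j:ℝ)+1) ^ ε))) := hSsum.mul_left _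
  have hFnormS : Summable (fun j => ‖F j‖) :=
    Summable.of_nonneg_of_le (fun j => norm_nonneg _) hKey hmaj
  have hFsum : Summable F := hFnormS.of_norm
  set G := ∑' j, F j with hGdef
  have hGsum : HasSum F G := hFsum.hasSum
  have hGp : ∀ p : (Fin d₂ → ℕ) × (Fin d₁ → ℕ),
      (G : ∀ _ : (Fin d₂ → ℕ) × (Fin d₁ → ℕ), ℂ) p
        = (Real.sqrt (w₁ p.2 * w₂ p.1) : ℂ) * a p.1 p.2 := by
    intro p
    have h1 : HasSum (fun j => f j p)
        ((G : ∀ _ : (Fin d₂ → ℕ) × (Fin d₁ → ℕ), ℂ) p) := aux_hasSum_apply hGsum p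
    have h2 : (∑' j, ((Real.sqrt (w₁ p.2 * w₂ p.1) : ℂ) *
        ((lam j : ℂ) * u j p.1 * (starRingEnd ℂ) (v j p.2))))
        = (G : ∀ _ : (Fin d₂ → ℕ) × (Fin d₁ → ℕ), ℂ) p := h1.tsum_eq
    rw [← h2, tsum_mul_left, (hconv p.1 p.2).2]
  have hGnorm2 : ∀ p : (Fin d₂ → ℕ) × (Fin d₁ → ℕ),
      ‖(G : ∀ _ : (Fin d₂ → ℕ) × (Fin d₁ → ℕ), ℂ) p‖^2
        = (2 * msz p.2 + d₁) ^ (2*N₁) * (2 * msz p.1 + d₂) ^ (2*N₂) * ‖a p.1 p.2‖^2 := by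
    intro p
    rw [hGp p, norm_mul, Complex.norm_real, Real.norm_eq_abs,
      abs_of_nonneg (Real.sqrt_nonneg _), mul_pow,
      Real.sq_sqrt (mul_nonneg (hw₁0 _) (hw₂0 _)), hw₁, hw₂]
  have hGmem : Summable (fun p : (Fin d₂ → ℕ) × (Fin d₁ → ℕ) =>
      ‖(G : ∀ _ : (Fin d₂ → ℕ) × (Fin d₁ → ℕ), ℂ) p‖^2) := by
    have h0 : (0:ℝ) < ((2:ℝ≥0∞)).toReal := by norm_num
    have := (lp.memℓp G).summable h0
    have h2 : ((2:ℝ≥0∞)).toReal = (2:ℝ) := by norm_num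
    rw [h2] at this
    simpa only [Real.rpow_two] using this
  constructor
  · exact hGmem.congr (fun p => hGnorm2 p)
  · have e1 : (∑' p : (Fin d₂ → ℕ) × (Fin d₁ → ℕ),
        (2 * msz p.2 + d₁) ^ (2*N₁) * (2 * msz p.1 + d₂) ^ (2*N₂) * ‖a p.1 p.2‖^2)
        = ∑' p : (Fin d₂ → ℕ) × (Fin d₁ → ℕ),
            ‖(G : ∀ _ : (Fin d₂ → ℕ) × (Fin d₁ → ℕ), ℂ) p‖^2 :=
      tsum_congr fun p => (hGnorm2 p).symm
    rw [e1]
    have e2 : Real.sqrt (∑' p : (Fin d₂ → ℕ) × (Fin d₁ → ℕ),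
        ‖(G : ∀ _ : (Fin d₂ → ℕ) × (Fin d₁ → ℕ), ℂ) p‖^2) = ‖G‖ := by
      rw [lp.norm_eq_tsum_rpow (by norm_num) G]
      have h2 : ((2:ℝ≥0∞)).toReal = (2:ℝ) := by norm_num
      rw [h2]
      simp only [Real.rpow_two]
      rw [← Real.sqrt_eq_rpow]
    rw [e2]
    calc ‖G‖ = ‖∑' j, F j‖ := by rw [hGdef]
    _ ≤ ∑' j, ‖F j‖ := norm_tsum_le_tsum_norm hFnormS
    _ ≤ ∑' j : ℕ, (C^3 * (h^(N₁+N₂) *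
          ((Nat.factorial N₁ : ℝ) * (Nat.factorial N₂ : ℝ)) ^ (2*s)))
            * Real.exp (-(r * ((j:ℝ)+1) ^ ε)) := Summable.tsum_le_tsum hKey hFnormS hmaj
    _ = (C^3 * (h^(N₁+N₂) *
          ((Nat.factorial N₁ : ℝ) * (Nat.factorial N₂ : ℝ)) ^ (2*s))) * S := by
        rw [tsum_mul_left]
    _ = C^3 * S * h ^ (N₁ + N₂) *
          ((Nat.factorial N₁ : ℝ) * (Nat.factorial N₂ : ℝ)) ^ (2*s) := by ring
end
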